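/- Let $A_{4_1}(\mu,\lambda) = -\lambda + \lambda\mu^2 + \mu^4 + 2\lambda\mu^4 + \lambda^2\mu^4 + \lambda\mu^6 - \lambda\mu^8$ be the A-polynomial of the figure-eight knot. For every integer $q$, the only non-simple root of the Laurent polynomial $A_{4_1}(x^{-q}, x)$ in $x$ is $x = -1$, which is a double root. -/

import Mathlib

set_option maxHeartbeats 1000000

noncomputable def Complex.abs : AbsoluteValue ℂ ℝ := NormedField.toAbsoluteValue ℂ

lemma Complex.abs_ofReal (r : ℝ) : Complex.abs (r : ℂ) = |r| := by
  show ‖(r : ℂ)‖ = |r|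
  simp

private lemma hasDerivAt_f (q : ℤ) (x : ℂ) (hx : x ≠ 0) :
    HasDerivAt (fun x : ℂ =>
      -x + x ^ (1 - 2*q) + x ^ (-(4*q)) + 2 * x ^ (1 - 4*q) + x ^ (2 - 4*q)
        + x ^ (1 - 6*q) - x ^ (1 - 8*q))
      (-1 + (1-2*q : ℤ) * x ^ (1-2*q-1) + (-(4*q) : ℤ) * x ^ (-(4*q)-1)
        + 2 * ((1-4*q : ℤ) * x ^ (1-4*q-1)) + (2-4*q : ℤ) * x ^ (2-4*q-1)
        + (1-6*q : ℤ) * x ^ (1-6*q-1) - (1-8*q : ℤ) * x ^ (1-8*q-1)) x := by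
  have h0 : HasDerivAt (fun y : ℂ => -y) (-1) x := (hasDerivAt_id x).neg
  have h1 := hasDerivAt_zpow (1-2*q) x (Or.inl hx)
  have h2 := hasDerivAt_zpow (-(4*q)) x (Or.inl hx)
  have h3 := (hasDerivAt_zpow (1-4*q) x (Or.inl hx)).const_mul (2:ℂ)
  have h4 := hasDerivAt_zpow (2-4*q) x (Or.inl hx)
  have h5 := hasDerivAt_zpow (1-6*q) x (Or.inl hx)
  have h6 := hasDerivAt_zpow (1-8*q) x (Or.inl hx)
  exact ((((((h0.add h1).add h2).add h3).add h4).add h5).sub h6)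

private lemma pow_helper (x : ℂ) (hx : x ≠ 0) (q : ℤ) (a : ℤ) (b : ℕ) :
    x ^ (a - 2*q*b) = x ^ a * ((x^(2*q))⁻¹) ^ b := by
  rw [sub_eq_add_neg, zpow_add₀ hx, show -(2*q*(b:ℤ)) = (2*q)*(-(b:ℤ)) by ring, zpow_mul,
    zpow_neg, zpow_natCast, ← inv_pow]

private lemma neg_one_zpow_even (k : ℤ) : (-1:ℂ) ^ (2*k) = 1 := by
  rw [zpow_mul, show ((-1:ℂ))^(2:ℤ) = 1 by norm_num, one_zpow]

private lemma neg_one_zpow_odd (k : ℤ) : (-1:ℂ) ^ (2*k+1) = -1 := by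
  rw [zpow_add₀ (by norm_num : (-1:ℂ) ≠ 0), neg_one_zpow_even, one_mul, zpow_one]

private lemma pow_big (w : ℝ) (hw : 10/3 ≤ w) (n : ℤ) (hn : 2 ≤ n) : (100/9:ℝ) ≤ w ^ n := by
  have h1 : (1:ℝ) ≤ w := by linarith
  have h2 : w ^ (2:ℤ) ≤ w ^ n := zpow_le_zpow_right₀ h1 hn
  have h3 : w ^ (2:ℤ) = w * w := by
    rw [show (2:ℤ) = ((2:ℕ):ℤ) from rfl, zpow_natCast, sq]
  calc (100/9:ℝ) = (10/3)*(10/3) := by norm_num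
    _ ≤ w*w := by nlinarith
    _ = w ^ (2:ℤ) := h3.symm
    _ ≤ w ^ n := h2

private lemma contra_aux (τ ρ : ℝ) (hρ : 0 < ρ) (hτ : τ ≤ 4/3)
    (h1 : ρ - ρ⁻¹ ≤ τ) (h2 : ρ⁻¹ - ρ ≤ τ)
    (hbig : (100/9:ℝ) ≤ ρ ∨ (100/9:ℝ) ≤ ρ⁻¹) : False := by
  have hρi : 0 < ρ⁻¹ := by positivity
  have hm : ρ * ρ⁻¹ = 1 := mul_inv_cancel₀ hρ.ne'
  rcases hbig with h | h
  · nlinarith [mul_le_mul_of_nonneg_right h hρi.le]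
  · nlinarith [mul_le_mul_of_nonneg_left h hρ.le]

/-- Let `f(x) = A_{4_1}(x^{-q}, x)` be the A-polynomial of the figure-eight knot evaluated along
the curve `(x^{-q}, x)`, i.e.
`f(x) = -x + x^{1-2q} + x^{-4q} + 2x^{1-4q} + x^{2-4q} + x^{1-6q} - x^{1-8q}`.
For every integer `q`, the only non-simple root of `f` on `ℂ*` is `x = -1`, which is a double
root: any root `x ≠ 0, -1` is simple (nonvanishing derivative), while `f(-1) = 0`,
`f'(-1) = 0` and `f''(-1) ≠ 0`. -/
theorem stmt3 (q : ℤ) (f : ℂ → ℂ)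
    (hf : f = fun x : ℂ =>
      -x + x ^ (1 - 2*q) + x ^ (-(4*q)) + 2 * x ^ (1 - 4*q) + x ^ (2 - 4*q)
        + x ^ (1 - 6*q) - x ^ (1 - 8*q)) :
    (∀ x : ℂ, x ≠ 0 → x ≠ -1 → f x = 0 → deriv f x ≠ 0) ∧
    f (-1) = 0 ∧ deriv f (-1) = 0 ∧ iteratedDeriv 2 f (-1) ≠ 0 := by
  subst hf
  refine ⟨?_, ?_, ?_, ?_⟩
  · -- simple roots away from -1
    intro x hx0 hxm1 hfx hdx
    rw [(hasDerivAt_f q x hx0).deriv] at hdx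
    replace hfx : -x + x ^ (1 - 2*q) + x ^ (-(4*q)) + 2 * x ^ (1 - 4*q) + x ^ (2 - 4*q)
        + x ^ (1 - 6*q) - x ^ (1 - 8*q) = 0 := hfx
    obtain ⟨z, hz_def⟩ : ∃ z : ℂ, x ^ (2*q) = z := ⟨_, rfl⟩
    have hz : z ≠ 0 := hz_def ▸ zpow_ne_zero _ hx0
    obtain ⟨v, hv_def⟩ : ∃ v : ℂ, z⁻¹ = v := ⟨_, rfl⟩
    have hv : v ≠ 0 := hv_def ▸ inv_ne_zero hz
    obtain ⟨w, hw_def⟩ : ∃ w : ℂ, x⁻¹ = w := ⟨_, rfl⟩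
    have hvz : v * z = 1 := by rw [← hv_def]; exact inv_mul_cancel₀ hz
    have hxw : x * w = 1 := by rw [← hw_def]; exact mul_inv_cancel₀ hx0
    -- rewrite powers
    have r1 : x ^ (1 - 2*q) = x * v := by
      have h := pow_helper x hx0 q 1 1
      rw [show (1:ℤ) - 2*q*((1:ℕ):ℤ) = 1 - 2*q by push_cast; ring, zpow_one, pow_one,
        hz_def, hv_def] at h
      exact h
    have r2 : x ^ (-(4*q)) = v^2 := by
      have h := pow_helper x hx0 q 0 2
      rw [show (0:ℤ) - 2*q*((2:ℕ):ℤ) = -(4*q) by push_cast; ring, zpow_zero, one_mul,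
        hz_def, hv_def] at h
      exact h
    have r3 : x ^ (1 - 4*q) = x * v^2 := by
      have h := pow_helper x hx0 q 1 2
      rw [show (1:ℤ) - 2*q*((2:ℕ):ℤ) = 1 - 4*q by push_cast; ring, zpow_one,
        hz_def, hv_def] at h
      exact h
    have r4 : x ^ (2 - 4*q) = x^2 * v^2 := by
      have h := pow_helper x hx0 q 2 2
      rw [show (2:ℤ) - 2*q*((2:ℕ):ℤ) = 2 - 4*q by push_cast; ring, hz_def, hv_def,
        show x ^ (2:ℤ) = x^2 by rw [show (2:ℤ) = ((2:ℕ):ℤ) from rfl, zpow_natCast]] at h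
      exact h
    have r5 : x ^ (1 - 6*q) = x * v^3 := by
      have h := pow_helper x hx0 q 1 3
      rw [show (1:ℤ) - 2*q*((3:ℕ):ℤ) = 1 - 6*q by push_cast; ring, zpow_one,
        hz_def, hv_def] at h
      exact h
    have r6 : x ^ (1 - 8*q) = x * v^4 := by
      have h := pow_helper x hx0 q 1 4
      rw [show (1:ℤ) - 2*q*((4:ℕ):ℤ) = 1 - 8*q by push_cast; ring, zpow_one,
        hz_def, hv_def] at h
      exact h
    have d1 : x ^ (1-2*q-1) = v := by
      have h := pow_helper x hx0 q 0 1
      rw [show (0:ℤ) - 2*q*((1:ℕ):ℤ) = 1-2*q-1 by push_cast; ring, zpow_zero, one_mul,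
        pow_one, hz_def, hv_def] at h
      exact h
    have d2 : x ^ (-(4*q)-1) = w * v^2 := by
      have h := pow_helper x hx0 q (-1) 2
      rw [show (-1:ℤ) - 2*q*((2:ℕ):ℤ) = -(4*q)-1 by push_cast; ring, zpow_neg_one,
        hw_def, hz_def, hv_def] at h
      exact h
    have d3 : x ^ (1-4*q-1) = v^2 := by
      have h := pow_helper x hx0 q 0 2
      rw [show (0:ℤ) - 2*q*((2:ℕ):ℤ) = 1-4*q-1 by push_cast; ring, zpow_zero, one_mul,
        hz_def, hv_def] at h
      exact h
    have d4 : x ^ (2-4*q-1) = x * v^2 := by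
      have h := pow_helper x hx0 q 1 2
      rw [show (1:ℤ) - 2*q*((2:ℕ):ℤ) = 2-4*q-1 by push_cast; ring, zpow_one,
        hz_def, hv_def] at h
      exact h
    have d5 : x ^ (1-6*q-1) = v^3 := by
      have h := pow_helper x hx0 q 0 3
      rw [show (0:ℤ) - 2*q*((3:ℕ):ℤ) = 1-6*q-1 by push_cast; ring, zpow_zero, one_mul,
        hz_def, hv_def] at h
      exact h
    have d6 : x ^ (1-8*q-1) = v^4 := by
      have h := pow_helper x hx0 q 0 4
      rw [show (0:ℤ) - 2*q*((4:ℕ):ℤ) = 1-8*q-1 by push_cast; ring, zpow_zero, one_mul,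
        hz_def, hv_def] at h
      exact h
    rw [r1, r2, r3, r4, r5, r6] at hfx
    rw [d1, d2, d3, d4, d5, d6] at hdx
    push_cast at hdx
    -- polynomial consequences
    have hE1 : -x + x*v + v^2 + 2*(x*v^2) + x^2*v^2 + x*v^3 - x*v^4 = 0 := by
      linear_combination hfx
    have hE2 : -x + (1-2*(q:ℂ))*x*v - 4*(q:ℂ)*v^2 + 2*(1-4*(q:ℂ))*x*v^2
        + (2-4*(q:ℂ))*x^2*v^2 + (1-6*(q:ℂ))*x*v^3 - (1-8*(q:ℂ))*x*v^4 = 0 := by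
      linear_combination x*hdx + 4*(q:ℂ)*v^2*hxw
    have hS : v^2*(x^2+1) = x*(v^4 - v^3 - 2*v^2 - v + 1) := by
      linear_combination hE1
    have hB : v^2*(x^2-1) = -(2*(q:ℂ)*x*(v^2-1)*(2*v^2-v+2)) := by
      linear_combination (4*(q:ℂ)-1)*hE1 + hE2
    have hKey : x^2*((v-1)^2*(v+1)^2*((v^2+v+1)*(v^2-3*v+1)
        - 4*(q:ℂ)^2*(2*v^2-v+2)^2)) = 0 := by
      linear_combination (-(v^2*(x^2+1) + x*(v^4 - v^3 - 2*v^2 - v + 1)))*hS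
        + (v^2*(x^2-1) - 2*(q:ℂ)*x*(v^2-1)*(2*v^2-v+2))*hB
    have hKey2 : (v-1)^2*(v+1)^2*((v^2+v+1)*(v^2-3*v+1)
        - 4*(q:ℂ)^2*(2*v^2-v+2)^2) = 0 := by
      rcases mul_eq_zero.mp hKey with h | h
      · exact absurd h (pow_ne_zero 2 hx0)
      · exact h
    rcases mul_eq_zero.mp hKey2 with h12 | hR
    · rcases mul_eq_zero.mp h12 with h1 | h2
      · -- v = 1 forces x = -1
        have hv1 : v = 1 := sub_eq_zero.mp ((pow_eq_zero_iff two_ne_zero).mp h1)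
        rw [hv1] at hS
        have hx1 : (x+1)^2 = 0 := by linear_combination hS
        exact hxm1 (eq_neg_of_add_eq_zero_left ((pow_eq_zero_iff two_ne_zero).mp hx1))
      · -- v = -1 forces x = 1, impossible
        have hv1 : v = -1 := eq_neg_of_add_eq_zero_left ((pow_eq_zero_iff two_ne_zero).mp h2)
        rw [hv1] at hS
        have hx1 : (x-1)^2 = 0 := by linear_combination hS
        have hx1' : x = 1 := sub_eq_zero.mp ((pow_eq_zero_iff two_ne_zero).mp hx1)
        rw [hx1'] at hz_def
        rw [one_zpow] at hz_def
        rw [← hz_def, inv_one] at hv_def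
        rw [← hv_def] at hv1
        norm_num at hv1
    · -- the quadratic case
      rcases eq_or_ne q 0 with hq0 | hq0
      · rw [hq0] at hz_def
        norm_num at hz_def
        rw [← hz_def, inv_one] at hv_def
        rw [hq0, ← hv_def] at hR
        norm_num at hR
      · -- q ≠ 0 : analytic contradiction
        have hQr : (1:ℝ) ≤ (q:ℝ)^2 := by
          have h1 : (1:ℤ) ≤ q^2 := by rcases hq0.lt_or_gt with h | h <;> nlinarith
          exact_mod_cast h1
        -- derived complex equations
        have hTpre : v^2*((16*(q:ℂ)^2-1)*(v+z)^2 - ((16*(q:ℂ)^2-2)*(v+z) - (3+4*(q:ℂ)^2))) = 0 := by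
          linear_combination (-1)*hR + ((16*(q:ℂ)^2-1)*(2*v^2+v*z+1) - (16*(q:ℂ)^2-2)*v)*hvz
        have hT : (16*(q:ℂ)^2-1)*(v+z)^2 = (16*(q:ℂ)^2-2)*(v+z) - (3+4*(q:ℂ)^2) := by
          rcases mul_eq_zero.mp hTpre with h | h
          · exact absurd h (pow_ne_zero 2 hv)
          · linear_combination h
        have hpre : x*v^2*((16*(q:ℂ)^2-1)*(x+w) + ((v+z) + 68*(q:ℂ)^2 - 1)) = 0 := by
          linear_combination (16*(q:ℂ)^2-1)*hS - x*hR + x*v*hvz + (16*(q:ℂ)^2-1)*v^2*hxw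
        have hSlin : (16*(q:ℂ)^2-1)*(x+w) = -((v+z) + 68*(q:ℂ)^2 - 1) := by
          rcases mul_eq_zero.mp hpre with h | h
          · rcases mul_eq_zero.mp h with h' | h'
            · exact absurd h' hx0
            · exact absurd h' (pow_ne_zero 2 hv)
          · linear_combination h
        -- absolute values
        set τ : ℝ := Complex.abs (v + z) with hτ_def
        set σ : ℝ := Complex.abs (x + w) with hσ_def
        set r : ℝ := Complex.abs x with hr_def
        set ρ : ℝ := Complex.abs z with hρ_def
        have c1 : Complex.abs (16*(q:ℂ)^2 - 1) = 16*(q:ℝ)^2 - 1 := by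
          rw [show (16*(q:ℂ)^2 - 1 : ℂ) = (((16*(q:ℝ)^2 - 1 : ℝ)) : ℂ) by push_cast; ring,
            Complex.abs_ofReal, abs_of_nonneg (by nlinarith)]
        have c2 : Complex.abs (16*(q:ℂ)^2 - 2) = 16*(q:ℝ)^2 - 2 := by
          rw [show (16*(q:ℂ)^2 - 2 : ℂ) = (((16*(q:ℝ)^2 - 2 : ℝ)) : ℂ) by push_cast; ring,
            Complex.abs_ofReal, abs_of_nonneg (by nlinarith)]
        have c3 : Complex.abs (3 + 4*(q:ℂ)^2) = 3 + 4*(q:ℝ)^2 := by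
          rw [show (3 + 4*(q:ℂ)^2 : ℂ) = (((3 + 4*(q:ℝ)^2 : ℝ)) : ℂ) by push_cast; ring,
            Complex.abs_ofReal, abs_of_nonneg (by nlinarith)]
        have c4 : Complex.abs (68*(q:ℂ)^2 - 1) = 68*(q:ℝ)^2 - 1 := by
          rw [show (68*(q:ℂ)^2 - 1 : ℂ) = (((68*(q:ℝ)^2 - 1 : ℝ)) : ℂ) by push_cast; ring,
            Complex.abs_ofReal, abs_of_nonneg (by nlinarith)]
        have hτ0 : 0 ≤ τ := AbsoluteValue.nonneg _ _
        -- bound τ ≤ 4/3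
        have eT : (16*(q:ℝ)^2-1)*τ^2 = Complex.abs ((16*(q:ℂ)^2-2)*(v+z) - (3+4*(q:ℂ)^2)) := by
          rw [← hT, map_mul, map_pow, c1, hτ_def]
        have eT2 : Complex.abs ((16*(q:ℂ)^2-2)*(v+z) - (3+4*(q:ℂ)^2))
            ≤ (16*(q:ℝ)^2-2)*τ + (3+4*(q:ℝ)^2) := by
          have h := Complex.abs.add_le ((16*(q:ℂ)^2-2)*(v+z)) (-(3+4*(q:ℂ)^2))
          rw [← sub_eq_add_neg, AbsoluteValue.map_neg, map_mul, c2, c3] at h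
          exact h
        have hτb : τ ≤ 4/3 := by
          by_contra hcon
          push_neg at hcon
          nlinarith [eT.le.trans eT2, mul_nonneg (mul_nonneg (by nlinarith : (0:ℝ) ≤ 16*(q:ℝ)^2-1) (by linarith : (0:ℝ) ≤ τ - 4/3)) hτ0]
        -- bound σ ≥ 4
        have eS : (16*(q:ℝ)^2-1)*σ = Complex.abs ((v+z) + 68*(q:ℂ)^2 - 1) := by
          rw [hσ_def, ← c1, ← map_mul, hSlin, AbsoluteValue.map_neg]
        have eS2 : 68*(q:ℝ)^2 - 1 ≤ Complex.abs ((v+z) + 68*(q:ℂ)^2 - 1) + τ := by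
          have h := Complex.abs.add_le ((v+z) + 68*(q:ℂ)^2 - 1) (-(v+z))
          rw [show (v+z) + 68*(q:ℂ)^2 - 1 + -(v+z) = 68*(q:ℂ)^2 - 1 by ring,
            AbsoluteValue.map_neg, c4, ← hτ_def] at h
          exact h
        have eS' : 68*(q:ℝ)^2 - 1 ≤ (16*(q:ℝ)^2-1)*σ + τ := by rw [eS]; exact eS2
        have hσ4 : 4 ≤ σ := by
          by_contra hcon
          push_neg at hcon
          nlinarith [mul_le_mul_of_nonneg_left hcon.le (by nlinarith : (0:ℝ) ≤ 16*(q:ℝ)^2-1)]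
        -- r bounds
        have hr0 : 0 < r := AbsoluteValue.pos _ hx0
        have hσr : σ ≤ r + r⁻¹ := by
          have h := Complex.abs.add_le x w
          have h2 : Complex.abs w = (Complex.abs x)⁻¹ := by rw [← hw_def, map_inv₀]
          rw [h2] at h
          rw [hσ_def, hr_def]
          exact h
        have hrr : r^2 - 4*r + 1 ≥ 0 := by
          have h1 : (4:ℝ) ≤ r + r⁻¹ := le_trans hσ4 hσr
          have h2 : r * r⁻¹ = 1 := mul_inv_cancel₀ hr0.ne'
          nlinarith [mul_le_mul_of_nonneg_right h1 hr0.le]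
        have hbig : (10/3:ℝ) ≤ r ∨ (10/3:ℝ) ≤ r⁻¹ := by
          rcases le_or_gt 2 r with h2r | h2r
          · left
            by_contra hcon
            push_neg at hcon
            nlinarith [mul_nonneg (by linarith : (0:ℝ) ≤ r - 2) (by linarith : (0:ℝ) ≤ 10/3 - r)]
          · right
            have hr3 : r ≤ 3/10 := by
              by_contra hcon
              push_neg at hcon
              nlinarith [mul_nonneg (by linarith : (0:ℝ) ≤ r - 3/10) (by linarith : (0:ℝ) ≤ 2 - r)]
            have h : (10/3:ℝ)*r ≤ 1 := by nlinarith
            have hinv : (0:ℝ) ≤ r⁻¹ := by positivity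
            calc (10/3:ℝ) = 10/3*(r*r⁻¹) := by rw [mul_inv_cancel₀ hr0.ne', mul_one]
              _ = 10/3*r*r⁻¹ := by ring
              _ ≤ 1 * r⁻¹ := mul_le_mul_of_nonneg_right h hinv
              _ = r⁻¹ := one_mul _
        -- relation ρ = r^(2q)
        have hρ_eq : ρ = r ^ (2*q) := by rw [hρ_def, hr_def, ← hz_def, map_zpow₀]
        have hρ0 : 0 < ρ := AbsoluteValue.pos _ hz
        have hva : Complex.abs v = (Complex.abs z)⁻¹ := by rw [← hv_def, map_inv₀]
        have hτρ1 : ρ - ρ⁻¹ ≤ τ := by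
          have h := Complex.abs.add_le (v + z) (-v)
          rw [show v + z + -v = z by ring, AbsoluteValue.map_neg, hva] at h
          rw [hτ_def, hρ_def]
          linarith
        have hτρ2 : ρ⁻¹ - ρ ≤ τ := by
          have h := Complex.abs.add_le (v + z) (-z)
          rw [show v + z + -z = v by ring, AbsoluteValue.map_neg, hva] at h
          rw [hτ_def, hρ_def]
          linarith
        have hbig2 : (100/9:ℝ) ≤ ρ ∨ (100/9:ℝ) ≤ ρ⁻¹ := by
          have hρinv1 : ρ⁻¹ = r ^ (-(2*q)) := by rw [hρ_eq, ← zpow_neg]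
          have hρinv2 : ρ⁻¹ = (r⁻¹) ^ (2*q) := by rw [hρ_eq, ← inv_zpow]
          have hρ2 : ρ = (r⁻¹) ^ (-(2*q)) := by rw [inv_zpow, zpow_neg, inv_inv, hρ_eq]
          rcases hbig with hb | hb
          · rcases hq0.lt_or_gt with hq | hq
            · right; rw [hρinv1]; exact pow_big r hb _ (by omega)
            · left; rw [hρ_eq]; exact pow_big r hb _ (by omega)
          · rcases hq0.lt_or_gt with hq | hq
            · left; rw [hρ2]; exact pow_big r⁻¹ hb _ (by omega)
            · right; rw [hρinv2]; exact pow_big r⁻¹ hb _ (by omega)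
        exact contra_aux τ ρ hρ0 hτb hτρ1 hτρ2 hbig2
  · -- f(-1) = 0
    show -(-1:ℂ) + (-1:ℂ) ^ (1-2*q) + (-1:ℂ) ^ (-(4*q)) + 2 * (-1:ℂ) ^ (1-4*q)
      + (-1:ℂ) ^ (2-4*q) + (-1:ℂ) ^ (1-6*q) - (-1:ℂ) ^ (1-8*q) = 0
    rw [show (1:ℤ)-2*q = 2*(-q)+1 by ring, show -(4*q) = 2*(-(2*q)) by ring,
      show (1:ℤ)-4*q = 2*(-(2*q))+1 by ring, show (2:ℤ)-4*q = 2*(1-2*q) by ring,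
      show (1:ℤ)-6*q = 2*(-(3*q))+1 by ring, show (1:ℤ)-8*q = 2*(-(4*q))+1 by ring]
    simp only [neg_one_zpow_even, neg_one_zpow_odd]
    ring
  · -- f'(-1) = 0
    rw [(hasDerivAt_f q (-1) (by norm_num)).deriv]
    rw [show (1:ℤ)-2*q-1 = 2*(-q) by ring, show -(4*q)-1 = 2*(-(2*q)-1)+1 by ring,
      show (1:ℤ)-4*q-1 = 2*(-(2*q)) by ring, show (2:ℤ)-4*q-1 = 2*(-(2*q))+1 by ring,
      show (1:ℤ)-6*q-1 = 2*(-(3*q)) by ring, show (1:ℤ)-8*q-1 = 2*(-(4*q)) by ring]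
    simp only [neg_one_zpow_even, neg_one_zpow_odd]
    push_cast
    ring
  · -- f''(-1) ≠ 0
    have hev : (deriv fun x : ℂ =>
        -x + x ^ (1 - 2*q) + x ^ (-(4*q)) + 2 * x ^ (1 - 4*q) + x ^ (2 - 4*q)
          + x ^ (1 - 6*q) - x ^ (1 - 8*q)) =ᶠ[nhds (-1:ℂ)] (fun y : ℂ =>
        -1 + (1-2*q : ℤ) * y ^ (1-2*q-1) + (-(4*q) : ℤ) * y ^ (-(4*q)-1)
          + 2 * ((1-4*q : ℤ) * y ^ (1-4*q-1)) + (2-4*q : ℤ) * y ^ (2-4*q-1)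
          + (1-6*q : ℤ) * y ^ (1-6*q-1) - (1-8*q : ℤ) * y ^ (1-8*q-1)) := by
      filter_upwards [compl_singleton_mem_nhds (show (-1:ℂ) ≠ 0 by norm_num)] with y hy
      exact (hasDerivAt_f q y hy).deriv
    have hD : HasDerivAt (fun y : ℂ =>
        -1 + (1-2*q : ℤ) * y ^ (1-2*q-1) + (-(4*q) : ℤ) * y ^ (-(4*q)-1)
          + 2 * ((1-4*q : ℤ) * y ^ (1-4*q-1)) + (2-4*q : ℤ) * y ^ (2-4*q-1)
          + (1-6*q : ℤ) * y ^ (1-6*q-1) - (1-8*q : ℤ) * y ^ (1-8*q-1))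
        (0 + (1-2*q : ℤ) * ((1-2*q-1 : ℤ) * (-1:ℂ) ^ (1-2*q-1-1))
          + (-(4*q) : ℤ) * ((-(4*q)-1 : ℤ) * (-1:ℂ) ^ (-(4*q)-1-1))
          + 2 * ((1-4*q : ℤ) * ((1-4*q-1 : ℤ) * (-1:ℂ) ^ (1-4*q-1-1)))
          + (2-4*q : ℤ) * ((2-4*q-1 : ℤ) * (-1:ℂ) ^ (2-4*q-1-1))
          + (1-6*q : ℤ) * ((1-6*q-1 : ℤ) * (-1:ℂ) ^ (1-6*q-1-1))
          - (1-8*q : ℤ) * ((1-8*q-1 : ℤ) * (-1:ℂ) ^ (1-8*q-1-1))) (-1) := by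
      have hx : (-1:ℂ) ≠ 0 := by norm_num
      have h0 : HasDerivAt (fun _ : ℂ => (-1:ℂ)) 0 (-1) := hasDerivAt_const _ _
      have h1 := (hasDerivAt_zpow (1-2*q-1) (-1:ℂ) (Or.inl hx)).const_mul ((1-2*q : ℤ) : ℂ)
      have h2 := (hasDerivAt_zpow (-(4*q)-1) (-1:ℂ) (Or.inl hx)).const_mul ((-(4*q) : ℤ) : ℂ)
      have h3 := ((hasDerivAt_zpow (1-4*q-1) (-1:ℂ) (Or.inl hx)).const_mul ((1-4*q : ℤ) : ℂ)).const_mul (2:ℂ)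
      have h4 := (hasDerivAt_zpow (2-4*q-1) (-1:ℂ) (Or.inl hx)).const_mul ((2-4*q : ℤ) : ℂ)
      have h5 := (hasDerivAt_zpow (1-6*q-1) (-1:ℂ) (Or.inl hx)).const_mul ((1-6*q : ℤ) : ℂ)
      have h6 := (hasDerivAt_zpow (1-8*q-1) (-1:ℂ) (Or.inl hx)).const_mul ((1-8*q : ℤ) : ℂ)
      exact ((((((h0.add h1).add h2).add h3).add h4).add h5).sub h6)
    rw [show (2:ℕ) = 1 + 1 from rfl, iteratedDeriv_succ, iteratedDeriv_one, hev.deriv_eq, hD.deriv]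
    rw [show (1:ℤ)-2*q-1-1 = 2*(-q-1)+1 by ring, show -(4*q)-1-1 = 2*(-(2*q)-1) by ring,
      show (1:ℤ)-4*q-1-1 = 2*(-(2*q)-1)+1 by ring, show (2:ℤ)-4*q-1-1 = 2*(-(2*q)) by ring,
      show (1:ℤ)-6*q-1-1 = 2*(-(3*q)-1)+1 by ring, show (1:ℤ)-8*q-1-1 = 2*(-(4*q)-1)+1 by ring]
    simp only [neg_one_zpow_even, neg_one_zpow_odd]
    have hne : ((24*q^2+2 : ℤ) : ℂ) ≠ 0 := Int.cast_ne_zero.mpr (by positivity)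
    intro h
    apply hne
    push_cast at h ⊢
    linear_combination h
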